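/- The smooth functional Ĵ : L²(0,1) → ℝ, Ĵ(f) = ‖f - id‖² - (3/4)(‖f‖² - 1/3)² has exactly two critical points, namely f = id and f = -2·id. -/

import Mathlib

open MeasureTheory

theorem stmt_5
    (idL2 : Lp ℝ 2 (volume.restrict (Set.Ioo (0 : ℝ) 1)))
    (hid : (idL2 : ℝ → ℝ) =ᵐ[volume.restrict (Set.Ioo (0 : ℝ) 1)] fun y => y) :
    ∀ f : Lp ℝ 2 (volume.restrict (Set.Ioo (0 : ℝ) 1)),
      fderiv ℝ (fun u : Lp ℝ 2 (volume.restrict (Set.Ioo (0 : ℝ) 1)) =>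
          ‖u - idL2‖ ^ 2 - 3 / 4 * (‖u‖ ^ 2 - 1 / 3) ^ 2) f = 0 ↔
        f = idL2 ∨ f = (-2 : ℝ) • idL2 := by
  intro f
  -- the norm of idL2
  have hnid : ‖idL2‖ ^ 2 = 1 / 3 := by
    have h1 : (inner ℝ idL2 idL2 : ℝ)
        = ∫ a, idL2 a * idL2 a ∂(volume.restrict (Set.Ioo (0 : ℝ) 1)) := by
      rw [L2.inner_def]; rfl
    have h2 : ∫ a, idL2 a * idL2 a ∂(volume.restrict (Set.Ioo (0 : ℝ) 1))
        = ∫ a in Set.Ioo (0:ℝ) 1, a * a := by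
      refine integral_congr_ae ?_
      filter_upwards [hid] with a ha
      simp [ha]
    have h3 : ∫ a in Set.Ioo (0:ℝ) 1, a * a = 1 / 3 := by
      rw [Measure.restrict_congr_set Ioo_ae_eq_Ioc,
        ← intervalIntegral.integral_of_le (by norm_num : (0:ℝ) ≤ 1)]
      have : ∀ a : ℝ, a * a = a ^ 2 := fun a => (sq a).symm
      simp_rw [this]
      rw [integral_pow]
      norm_num
    rw [← real_inner_self_eq_norm_sq, h1, h2, h3]
  -- the derivative
  set v : Lp ℝ 2 (volume.restrict (Set.Ioo (0 : ℝ) 1)) :=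
    (2 : ℝ) • (f - idL2) - (3 * (‖f‖ ^ 2 - 1/3)) • f with hv
  have hD : HasFDerivAt (fun u : Lp ℝ 2 (volume.restrict (Set.Ioo (0 : ℝ) 1)) =>
      ‖u - idL2‖ ^ 2 - 3 / 4 * (‖u‖ ^ 2 - 1 / 3) ^ 2) (innerSL ℝ v) f := by
    have h1 : HasFDerivAt (fun u : Lp ℝ 2 (volume.restrict (Set.Ioo (0 : ℝ) 1)) => ‖u - idL2‖ ^ 2)
        (2 • (innerSL ℝ (f - idL2)).comp (ContinuousLinearMap.id ℝ _)) f :=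
      ((hasFDerivAt_id f).sub_const idL2).norm_sq
    have h2 : HasFDerivAt (fun u : Lp ℝ 2 (volume.restrict (Set.Ioo (0 : ℝ) 1)) => ‖u‖ ^ 2)
        (2 • (innerSL ℝ f).comp (ContinuousLinearMap.id ℝ _)) f :=
      (hasFDerivAt_id f).norm_sq
    have hs := h2.sub_const (1/3)
    have hm := hs.mul hs
    have h3' : HasFDerivAt (fun u : Lp ℝ 2 (volume.restrict (Set.Ioo (0 : ℝ) 1)) =>
        (‖u‖ ^ 2 - 1 / 3) ^ 2)
        ((‖f‖ ^ 2 - 1/3) • (2 • (innerSL ℝ f).comp (ContinuousLinearMap.id ℝ _)) +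
          (‖f‖ ^ 2 - 1/3) • (2 • (innerSL ℝ f).comp (ContinuousLinearMap.id ℝ _))) f := by
      exact hm.congr_of_eventuallyEq (Filter.Eventually.of_forall fun u => by simp only [Pi.mul_apply]; ring)
    have h3 := h3'.const_mul (3/4 : ℝ)
    have h4 := h1.sub h3
    refine h4.congr_fderiv ?_
    ext h
    simp only [hv, innerSL_apply_apply, ContinuousLinearMap.coe_sub', Pi.sub_apply,
      ContinuousLinearMap.add_apply, ContinuousLinearMap.smul_apply,
      ContinuousLinearMap.coe_comp', ContinuousLinearMap.coe_id', Function.comp_apply, id,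
      smul_eq_mul, inner_sub_left, real_inner_smul_left]
    ring
  rw [hD.fderiv]
  constructor
  · intro h0
    have hv0 : v = 0 := by
      have h1 : (innerSL ℝ v) v = (0 : _ →L[ℝ] ℝ) v := by rw [h0]
      simp only [innerSL_apply_apply, ContinuousLinearMap.zero_apply] at h1
      exact inner_self_eq_zero.mp h1
    set c : ℝ := 2 - 3 * (‖f‖ ^ 2 - 1/3) with hcdef
    have hc : c • f = (2 : ℝ) • idL2 := by
      have hrw : c • f - (2 : ℝ) • idL2 = v := by rw [hv, hcdef]; module
      have := hrw.symm ▸ hv0  -- : c • f - 2 • idL2 = 0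
      rw [← hrw] at hv0
      exact sub_eq_zero.mp hv0
    by_cases hc0 : c = 0
    · exfalso
      rw [hc0, zero_smul] at hc
      have hz : idL2 = 0 := by
        have := hc.symm
        rcases smul_eq_zero.mp this with h | h
        · norm_num at h
        · exact h
      rw [hz] at hnid
      simp at hnid
    · set t : ℝ := 2 / c with htdef
      have hf : f = t • idL2 := by
        have h1 := congrArg (fun x => c⁻¹ • x) hc
        simp only [smul_smul, inv_mul_cancel₀ hc0, one_smul] at h1
        rw [h1, htdef]
        rw [div_eq_inv_mul]
      have hnf : ‖f‖ ^ 2 = t ^ 2 / 3 := by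
        rw [hf, norm_smul, mul_pow, Real.norm_eq_abs, sq_abs, hnid]
        ring
      have hceq : c = 3 - t ^ 2 := by rw [hcdef, hnf]; ring
      have hct : c * t = 2 := by
        rw [htdef]
        field_simp
      have ht3 : (t - 1) ^ 2 * (t + 2) = 0 := by
        rw [hceq] at hct
        linear_combination -hct
      rcases mul_eq_zero.mp ht3 with h | h
      · left
        have : t = 1 := by
          have := pow_eq_zero_iff (n := 2) (by norm_num) |>.mp h
          linarith
        rw [hf, this, one_smul]
      · right
        have : t = -2 := by linarith
        rw [hf, this]
  · intro h
    have hv0 : v = 0 := by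
      rcases h with h | h
      · have hS : ‖f‖ ^ 2 - 1/3 = 0 := by rw [h, hnid]; ring
        rw [hv, hS, h]
        module
      · have hnf : ‖f‖ ^ 2 = 4 / 3 := by
          rw [h, norm_smul, mul_pow, Real.norm_eq_abs, sq_abs, hnid]
          norm_num
        have hS : 3 * (‖f‖ ^ 2 - 1/3) = 3 := by rw [hnf]; ring
        rw [hv, hS, h]
        module
    rw [hv0]
    ext h
    simp
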